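/- Let K ⊆ ℝⁿ be a compact set and let V be a finite-dimensional vector subspace of the space C(K,ℝ) of continuous real-valued functions on K such that the functions in V have no common zero on K. If μ is a finite positive Borel measure on K, then there exist an integer r ≤ dim V + 1, points x₁,…,x_r ∈ K and nonnegative reals c₁,…,c_r such that for every f ∈ V one has ∫_K f dμ = Σ_{i=1}^r cᵢ f(xᵢ). -/

import Mathlib

open MeasureTheory

/-- Convex hull of a compact set in a finite-dimensional normed space is compact. -/
theorem isCompact_convexHull_of_isCompact' {E : Type*} [NormedAddCommGroup E] [NormedSpace ℝ E]
    [FiniteDimensional ℝ E] {s : Set E} (hs : IsCompact s) : IsCompact (convexHull ℝ s) := by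
  classical
  rcases s.eq_empty_or_nonempty with rfl | ⟨s₀, hs₀⟩
  · simpa [convexHull_empty] using isCompact_empty
  set d := Module.finrank ℝ E with hd
  set T : ((Fin (d + 1) → ℝ) × (Fin (d + 1) → E)) → E := fun p => ∑ j, p.1 j • p.2 j with hT
  have hTcont : Continuous T := by
    apply continuous_finset_sum
    intro j _
    exact ((continuous_apply j).comp continuous_fst).smul
      ((continuous_apply j).comp continuous_snd)
  set D : Set ((Fin (d + 1) → ℝ) × (Fin (d + 1) → E)) :=
    (stdSimplex ℝ (Fin (d + 1))) ×ˢ (Set.univ.pi fun _ => s) with hD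
  have hDcomp : IsCompact D :=
    (isCompact_stdSimplex (𝕜 := ℝ) (ι := Fin (d + 1))).prod (isCompact_univ_pi fun _ => hs)
  have himg : convexHull ℝ s = T '' D := by
    apply Set.Subset.antisymm
    · intro y hy
      obtain ⟨ι, hι, z, w, hzs, hai, hwpos, hwsum, hy⟩ :=
        eq_pos_convex_span_of_mem_convexHull hy
      haveI := hι
      have hwsum : ∑ i, w i = 1 := by convert hwsum
      have hy : ∑ i, w i • z i = y := by convert hy
      have hcard : Fintype.card ι ≤ d + 1 := by
        refine hai.card_le_finrank_succ.trans ?_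
        exact Nat.add_le_add_right (Submodule.finrank_le _) 1
      obtain ⟨e⟩ : Nonempty (ι ↪ Fin (d + 1)) :=
        Function.Embedding.nonempty_of_card_le (by simpa using hcard)
      set w' : Fin (d + 1) → ℝ := Function.extend e w (fun _ => 0) with hw'
      set z' : Fin (d + 1) → E := Function.extend e z (fun _ => s₀) with hz'
      have hwe : ∀ i, w' (e i) = w i := fun i => e.injective.extend_apply _ _ _
      have hze : ∀ i, z' (e i) = z i := fun i => e.injective.extend_apply _ _ _
      have hwo : ∀ j, (¬ ∃ i, e i = j) → w' j = 0 := fun j hj =>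
        Function.extend_apply' _ _ _ hj
      have hzo : ∀ j, (¬ ∃ i, e i = j) → z' j = s₀ := fun j hj =>
        Function.extend_apply' _ _ _ hj
      have hnm : ∀ j : Fin (d + 1), j ∉ Finset.univ.map e → ¬ ∃ i, e i = j := by
        rintro j hj ⟨i, hi⟩
        exact hj (Finset.mem_map.mpr ⟨i, Finset.mem_univ i, hi⟩)
      have h1 : ∑ j, w' j = 1 := by
        rw [← Finset.sum_subset (Finset.subset_univ (Finset.univ.map e))
          (fun j _ hj => hwo j (hnm j hj))]
        rw [Finset.sum_map]
        simpa [hwe] using hwsum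
      have h2 : ∑ j, w' j • z' j = y := by
        rw [← Finset.sum_subset (Finset.subset_univ (Finset.univ.map e))
          (fun j _ hj => by rw [hwo j (hnm j hj), zero_smul])]
        rw [Finset.sum_map]
        rw [← hy]
        exact Finset.sum_congr rfl fun i _ => by rw [hwe, hze]
      refine ⟨(w', z'), ⟨⟨fun j => ?_, h1⟩, fun j _ => ?_⟩, h2⟩
      · show 0 ≤ w' j
        by_cases hj : ∃ i, e i = j
        · obtain ⟨i, rfl⟩ := hj
          rw [hwe]; exact (hwpos i).le
        · rw [hwo j hj]
      · show z' j ∈ s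
        by_cases hj : ∃ i, e i = j
        · obtain ⟨i, rfl⟩ := hj
          rw [hze]; exact hzs ⟨i, rfl⟩
        · rw [hzo j hj]; exact hs₀
    · rintro y ⟨⟨w, z⟩, ⟨hw, hz⟩, rfl⟩
      exact (convex_convexHull ℝ s).sum_mem (fun j _ => hw.1 j) hw.2
        (fun j _ => subset_convexHull ℝ s (hz j (Set.mem_univ j)))
  rw [himg]
  exact hDcomp.image hTcont

/-- **Blekherman–Fialkow / Tchakaloff**: if `K ⊆ ℝⁿ` is compact, `V` is a
finite-dimensional subspace of `C(K, ℝ)` whose elements have no common zero on `K`,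
and `μ` is a finite positive Borel measure on `K`, then the moment functional of `μ`
on `V` is represented by a positive discrete measure with at most `dim V + 1` atoms. -/
theorem representable_by_discrete_measure {n : ℕ} (K : Set (Fin n → ℝ)) (hK : IsCompact K)
    (V : Submodule ℝ C(K, ℝ)) [FiniteDimensional ℝ V]
    (hnz : ∀ x : K, ∃ f ∈ V, (f : C(K, ℝ)) x ≠ 0)
    (μ : Measure K) [IsFiniteMeasure μ] :
    ∃ (r : ℕ), r ≤ Module.finrank ℝ V + 1 ∧
      ∃ (x : Fin r → K) (c : Fin r → ℝ), (∀ i, 0 ≤ c i) ∧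
        ∀ f ∈ V, ∫ z, (f : C(K, ℝ)) z ∂μ = ∑ i, c i * (f : C(K, ℝ)) (x i) := by
  classical
  haveI : CompactSpace K := isCompact_iff_compactSpace.mp hK
  by_cases hμ : μ = 0
  · refine ⟨0, by omega, Fin.elim0, Fin.elim0, fun i => i.elim0, fun f hf => ?_⟩
    simp [hμ]
  haveI : NeZero μ := ⟨hμ⟩
  set d := Module.finrank ℝ V with hd
  set b : Module.Basis (Fin d) ℝ V := Module.finBasis ℝ V with hb
  set φ : K → (Fin d → ℝ) := fun y j => ((b j : C(K, ℝ)) : K → ℝ) y with hφ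
  have hφcont : Continuous φ := continuous_pi fun j => (b j : C(K, ℝ)).continuous
  have hφint : Integrable φ μ := by
    apply hφcont.integrable_of_hasCompactSupport
    exact IsCompact.of_isClosed_subset isCompact_univ (isClosed_tsupport φ) (Set.subset_univ _)
  have hrange : IsCompact (Set.range φ) := isCompact_range hφcont
  have hhull : IsCompact (convexHull ℝ (Set.range φ)) :=
    isCompact_convexHull_of_isCompact' hrange
  have havg : (⨍ y, φ y ∂μ) ∈ convexHull ℝ (Set.range φ) :=
    (convex_convexHull ℝ _).average_mem hhull.isClosed
      (Filter.Eventually.of_forall fun y => subset_convexHull ℝ _ ⟨y, rfl⟩) hφint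
  obtain ⟨ι, hι, z, w, hzs, hai, hwpos, hwsum, havgeq⟩ :=
    eq_pos_convex_span_of_mem_convexHull havg
  haveI := hι
  have hwsum : ∑ i, w i = 1 := by convert hwsum
  have havgeq : ∑ i, w i • z i = ⨍ y, φ y ∂μ := by convert havgeq
  set r := Fintype.card ι with hr
  have hrle : r ≤ d + 1 := by
    refine hai.card_le_finrank_succ.trans ?_
    refine Nat.add_le_add_right ((Submodule.finrank_le _).trans ?_) 1
    simp [Module.finrank_fin_fun]
  set e : Fin r ≃ ι := (Fintype.equivFin ι).symm with he
  have hx : ∀ i : Fin r, ∃ y : K, φ y = z (e i) := fun i => hzs ⟨e i, rfl⟩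
  choose x hxφ using hx
  set c0 := (μ Set.univ).toReal with hc0
  have hc0pos : 0 < c0 := by
    refine ENNReal.toReal_pos ?_ (measure_ne_top μ _)
    simpa [Measure.measure_univ_eq_zero] using hμ
  set c : Fin r → ℝ := fun i => c0 * w (e i) with hc
  refine ⟨r, hrle, x, c, fun i => mul_nonneg hc0pos.le (hwpos (e i)).le, fun f hf => ?_⟩
  have hm : ∫ y, φ y ∂μ = c0 • ∑ i', w i' • z i' := by
    rw [havgeq, average_eq, measureReal_def, smul_smul, mul_inv_cancel₀ hc0pos.ne', one_smul]
  set v : V := ⟨f, hf⟩ with hv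
  have hfv : (f : K → ℝ) = fun y => ∑ j, b.repr v j * φ y j := by
    funext y
    have hrepr : (∑ j, b.repr v j • b j : V) = v := b.sum_repr v
    calc (f : K → ℝ) y = ((v : C(K, ℝ)) : K → ℝ) y := rfl
      _ = ((((∑ j, b.repr v j • b j : V) : C(K, ℝ))) : K → ℝ) y := by rw [hrepr]
      _ = ∑ j, b.repr v j * φ y j := by
          rw [Submodule.coe_sum]
          simp [hφ, ContinuousMap.sum_apply, smul_eq_mul]
  have hintj : ∀ j, Integrable (fun y => φ y j) μ := fun j =>
    (ContinuousLinearMap.proj (R := ℝ) (φ := fun _ : Fin d => ℝ) j).integrable_comp hφint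
  have hmj : ∀ j, ∫ y, φ y j ∂μ = (∫ y, φ y ∂μ) j := fun j =>
    (ContinuousLinearMap.proj (R := ℝ) (φ := fun _ : Fin d => ℝ) j).integral_comp_comm hφint
  calc ∫ y, (f : C(K, ℝ)) y ∂μ = ∫ y, ∑ j, b.repr v j * φ y j ∂μ := by
        simp only [hfv]
    _ = ∑ j, b.repr v j * ∫ y, φ y j ∂μ := by
        rw [integral_finset_sum _ fun j _ => (hintj j).const_mul _]
        exact Finset.sum_congr rfl fun j _ => integral_const_mul _ _
    _ = ∑ j, b.repr v j * (c0 * ∑ i', w i' * z i' j) := by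
        refine Finset.sum_congr rfl fun j _ => ?_
        rw [hmj j, hm]
        simp [Finset.sum_apply, smul_eq_mul]
    _ = ∑ i', (c0 * w i') * ∑ j, b.repr v j * z i' j := by
        simp_rw [Finset.mul_sum]
        rw [Finset.sum_comm]
        exact Finset.sum_congr rfl fun i' _ => Finset.sum_congr rfl fun j _ => by ring
    _ = ∑ i, c i * (f : C(K, ℝ)) (x i) := by
        rw [← Equiv.sum_comp e fun i' => (c0 * w i') * ∑ j, b.repr v j * z i' j]
        refine Finset.sum_congr rfl fun i _ => ?_
        have hz : ∑ j, b.repr v j * z (e i) j = (f : C(K, ℝ)) (x i) := by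
          rw [← hxφ i]
          exact (congrFun hfv (x i)).symm
        rw [hz]
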